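/- For trigonometric polynomials on the circle, the classical Bernstein inequality holds: if P(x) = ∑_{k=-N}^{N} α_k e^{ikx} with complex coefficients, then the supremum norm of P' is at most N times the supremum norm of P. -/

import Mathlib

open scoped BigOperators
open Complex Finset Real

namespace BernsteinAux

noncomputable def θ (N j : ℕ) : ℝ := (2*j+1) * Real.pi / (2*N)

noncomputable def F (N : ℕ) (m : ℤ) : ℂ :=
  ∑ j ∈ range (2*N), Complex.exp (Complex.I * m * θ N j) / ((Real.sin (θ N j / 2) : ℂ))^2

noncomputable def E (N : ℕ) (m : ℤ) : ℂ :=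
  ∑ j ∈ range (2*N), Complex.exp (Complex.I * m * θ N j)

lemma sin_theta_pos {N j : ℕ} (hN : 0 < N) (hj : j < 2*N) : 0 < Real.sin (θ N j / 2) := by
  apply Real.sin_pos_of_pos_of_lt_pi
  · unfold θ
    positivity
  · unfold θ
    rw [div_div]
    rw [div_lt_iff₀ (by positivity)]
    have : (2*(j:ℝ)+1) < 2*(2*N) := by
      have : (j:ℝ) + 1 ≤ 2*N := by exact_mod_cast hj
      linarith
    nlinarith [Real.pi_pos]

lemma sin_theta_ne {N j : ℕ} (hN : 0 < N) (hj : j < 2*N) :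
    ((Real.sin (θ N j / 2) : ℂ)) ≠ 0 :=
  Complex.ofReal_ne_zero.mpr (ne_of_gt (sin_theta_pos hN hj))

lemma E_zero (N : ℕ) : E N 0 = (2*N : ℕ) := by
  unfold E
  simp

lemma E_mid {N : ℕ} (hN : 0 < N) {m : ℤ} (hm0 : 0 < m) (hm1 : m < 2*N) : E N m = 0 := by
  have hNC : (N:ℂ) ≠ 0 := Nat.cast_ne_zero.mpr hN.ne'
  set w : ℂ := Complex.exp (Complex.I * m * (Real.pi / N)) with hw
  have hterm : ∀ j ∈ range (2*N),
      Complex.exp (Complex.I * m * θ N j) = Complex.exp (Complex.I * m * (Real.pi / (2*N))) * w ^ j := by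
    intro j _
    rw [hw, ← Complex.exp_nat_mul, ← Complex.exp_add]
    congr 1
    unfold θ
    push_cast
    field_simp
    ring
  rw [E, Finset.sum_congr rfl hterm, ← Finset.mul_sum]
  have hw1 : w ≠ 1 := by
    intro h
    obtain ⟨n, hn⟩ := Complex.exp_eq_one_iff.mp h
    have h2 : (m : ℂ) * Real.pi = (n : ℂ) * (2 * Real.pi) * N := by
      apply mul_left_cancel₀ Complex.I_ne_zero
      have h0 : Complex.I * (m:ℂ) * (Real.pi/N) * N = (n:ℂ) * (2*Real.pi*Complex.I) * N := by rw [hn]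
      have e : Complex.I * (m:ℂ) * ((Real.pi:ℂ)/N) * N = Complex.I * ((m:ℂ) * Real.pi) := by
        rw [mul_assoc, div_mul_cancel₀ _ hNC, mul_assoc]
      have e2 : (n:ℂ)*(2*Real.pi*Complex.I)*N = Complex.I*((n:ℂ)*(2*Real.pi)*N) := by ring
      rw [← e, h0, e2]
    have hpi : (Real.pi : ℂ) ≠ 0 := Complex.ofReal_ne_zero.mpr Real.pi_ne_zero
    have h4 : (m : ℂ) = (n : ℂ) * (2 * N) := by
      apply mul_right_cancel₀ hpi
      linear_combination h2
    have h5 : m = n * (2 * N) := by exact_mod_cast h4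
    rcases le_or_gt n 0 with hn0 | hn0
    · have : m ≤ 0 := by
        rw [h5]
        apply mul_nonpos_iff.mpr
        right
        exact ⟨hn0, by positivity⟩
      omega
    · have h6 : (1:ℤ) ≤ n := hn0
      have : (2:ℤ)*N ≤ m := by nlinarith [h5]
      omega
  rw [geom_sum_eq hw1]
  have hw2N : w ^ (2*N) = 1 := by
    rw [hw, ← Complex.exp_nat_mul]
    rw [show ((2*N : ℕ) : ℂ) * (Complex.I * m * (Real.pi / N)) = (m:ℂ) * (2 * Real.pi * Complex.I) by
      push_cast
      field_simp]
    exact Complex.exp_int_mul_two_pi_mul_I m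
  rw [hw2N]
  simp

lemma theta_reflect {N j : ℕ} (hN : 0 < N) (hj : j < 2*N) :
    θ N (2*N - 1 - j) = 2 * Real.pi - θ N j := by
  unfold θ
  have hNR : (N:ℝ) ≠ 0 := Nat.cast_ne_zero.mpr hN.ne'
  have hcast : ((2*N - 1 - j : ℕ) : ℝ) = 2*N - 1 - j := by
    have h1 : j ≤ 2*N-1 := by omega
    push_cast [Nat.cast_sub h1, Nat.cast_sub (by omega : 1 ≤ 2*N)]
    ring
  rw [hcast]
  field_simp
  ring

lemma F_neg (N : ℕ) (hN : 0 < N) (m : ℤ) : F N (-m) = F N m := by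
  unfold F
  rw [← Finset.sum_range_reflect]
  apply Finset.sum_congr rfl
  intro j hj
  rw [Finset.mem_range] at hj
  rw [theta_reflect hN hj]
  congr 1
  · rw [show Complex.I * (-m : ℤ) * ((2 * Real.pi - θ N j : ℝ) : ℂ)
        = Complex.I * m * (θ N j : ℝ) + (-m : ℤ) * (2 * Real.pi * Complex.I) by push_cast; ring]
    rw [Complex.exp_add, Complex.exp_int_mul_two_pi_mul_I, mul_one]
  · congr 1
    rw [show (2 * Real.pi - θ N j) / 2 = Real.pi - θ N j / 2 by ring, Real.sin_pi_sub]

lemma F_shift (N : ℕ) (hN : 0 < N) (m : ℤ) : F N (m + 2*N) = -F N m := by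
  unfold F
  rw [← Finset.sum_neg_distrib]
  apply Finset.sum_congr rfl
  intro j hj
  rw [Finset.mem_range] at hj
  rw [← neg_div]
  congr 1
  have : Complex.I * ((m + 2*N : ℤ) : ℂ) * (θ N j : ℝ)
      = Complex.I * m * (θ N j : ℝ) + ((2*j+1 : ℕ) : ℂ) * (Real.pi * Complex.I) := by
    unfold θ
    have hNC : (N:ℂ) ≠ 0 := Nat.cast_ne_zero.mpr hN.ne'
    push_cast
    field_simp
  rw [this, Complex.exp_add, Complex.exp_nat_mul, Complex.exp_pi_mul_I]
  rw [Odd.neg_one_pow ⟨j, by ring⟩]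
  ring

lemma F_second_diff (N : ℕ) (hN : 0 < N) (m : ℤ) :
    F N (m+1) + F N (m-1) - 2 * F N m = -4 * E N m := by
  unfold F E
  rw [Finset.mul_sum, Finset.mul_sum, ← Finset.sum_add_distrib, ← Finset.sum_sub_distrib]
  apply Finset.sum_congr rfl
  intro j hj
  rw [Finset.mem_range] at hj
  have hs := sin_theta_ne hN hj
  have hc : (Complex.cos (θ N j : ℝ)) = 1 - 2 * ((Real.sin (θ N j / 2) : ℂ))^2 := by
    rw [← Complex.ofReal_cos]
    norm_cast
    have h := Real.cos_two_mul (θ N j/2)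
    have h2 := Real.sin_sq_add_cos_sq (θ N j/2)
    rw [show 2*(θ N j/2) = θ N j by ring] at h
    nlinarith
  have key : Complex.exp (Complex.I * ((m+1:ℤ):ℂ) * (θ N j : ℝ))
      + Complex.exp (Complex.I * ((m-1:ℤ):ℂ) * (θ N j : ℝ))
      - 2 * Complex.exp (Complex.I * (m:ℂ) * (θ N j : ℝ))
      = Complex.exp (Complex.I * (m:ℂ) * (θ N j : ℝ)) * (-4 * ((Real.sin (θ N j / 2) : ℂ))^2) := by
    rw [show ((m+1:ℤ):ℂ) = (m:ℂ)+1 by push_cast; ring, show ((m-1:ℤ):ℂ) = (m:ℂ)-1 by push_cast; ring]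
    have e1 : Complex.I * ((m:ℂ)+1) * (θ N j : ℝ) = Complex.I * m * (θ N j : ℝ) + (θ N j : ℝ) * Complex.I := by ring
    have e2 : Complex.I * ((m:ℂ)-1) * (θ N j : ℝ) = Complex.I * m * (θ N j : ℝ) + (-(θ N j : ℝ)) * Complex.I := by ring
    rw [e1, e2, Complex.exp_add, Complex.exp_add, Complex.exp_mul_I, Complex.exp_mul_I,
      Complex.cos_neg, Complex.sin_neg, hc]
    ring
  have hs2 : ((Real.sin (θ N j / 2) : ℂ))^2 ≠ 0 := pow_ne_zero _ hs
  rw [← add_div, (mul_div_assoc (2:ℂ) _ _).symm, div_sub_div_same, key,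
    show Complex.exp (Complex.I * (m:ℂ) * (θ N j : ℝ)) * (-4 * ((Real.sin (θ N j / 2) : ℂ))^2)
      = (-4 * Complex.exp (Complex.I * (m:ℂ) * (θ N j : ℝ))) * ((Real.sin (θ N j / 2) : ℂ))^2 by ring,
    mul_div_assoc, div_self hs2, mul_one]

lemma F_N_eq_zero (N : ℕ) (hN : 0 < N) : F N N = 0 := by
  have h1 : F N ((-(N:ℤ)) + 2*N) = -F N (-(N:ℤ)) := F_shift N hN _
  rw [show (-(N:ℤ)) + 2*N = (N:ℤ) by ring, F_neg N hN] at h1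
  have h2 : (2:ℂ) * F N N = 0 := by linear_combination h1
  exact (mul_eq_zero.mp h2).resolve_left two_ne_zero

lemma F_diff (N : ℕ) (hN : 0 < N) : ∀ m : ℕ, m < 2*N →
    F N (m+1) - F N m = -(4*N) := by
  have base : F N 1 - F N 0 = -(4*N) := by
    have h := F_second_diff N hN 0
    rw [E_zero N] at h
    norm_num at h
    rw [F_neg N hN 1] at h
    linear_combination h/2
  intro m
  induction m with
  | zero => intro _; simpa using base
  | succ m ih =>
    intro hm
    have hm' : m < 2*N := by omega
    have h := F_second_diff N hN (m+1)
    rw [E_mid hN (by positivity) (by exact_mod_cast hm)] at h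
    have ihv := ih hm'
    rw [show (m:ℤ)+1-1 = (m:ℤ) by ring] at h
    push_cast at ihv ⊢
    linear_combination h + ihv

lemma F_nat_val (N : ℕ) (hN : 0 < N) : ∀ m : ℕ, m ≤ 2*N →
    F N m = F N 0 - 4*N*m := by
  intro m
  induction m with
  | zero => intro _; simp
  | succ m ih =>
    intro hm
    have h1 := F_diff N hN m (by omega)
    have h2 := ih (by omega)
    push_cast at h1 h2 ⊢
    linear_combination h1 + h2

lemma F_zero_val (N : ℕ) (hN : 0 < N) : F N 0 = 4*N*N := by
  have h := F_nat_val N hN N (by omega)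
  rw [F_N_eq_zero N hN] at h
  linear_combination -h

lemma F_val (N : ℕ) (hN : 0 < N) (m : ℤ) (h0 : 0 ≤ m) (h1 : m ≤ 2*N) :
    F N m = 4*N*((N:ℂ) - m) := by
  obtain ⟨mn, rfl⟩ := Int.eq_ofNat_of_zero_le h0
  have hle : mn ≤ 2*N := by exact_mod_cast h1
  have hv := F_nat_val N hN mn hle
  rw [F_zero_val N hN] at hv
  rw [show ((mn:ℕ):ℤ) = (mn:ℤ) by norm_cast] at *
  rw [hv]
  push_cast
  ring

noncomputable def c (N j : ℕ) : ℝ := (-1)^j / (4*N * (Real.sin (θ N j / 2))^2)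

lemma exp_pi_div_two : Complex.exp ((Real.pi/2 : ℝ) * Complex.I) = Complex.I := by
  rw [Complex.exp_mul_I, show ((Real.pi/2:ℝ):ℂ) = (Real.pi:ℂ)/2 by push_cast; ring,
    Complex.cos_pi_div_two, Complex.sin_pi_div_two]
  ring

lemma exp_N_theta {N j : ℕ} (hN : 0 < N) :
    Complex.exp (Complex.I * (N:ℂ) * (θ N j : ℝ)) = Complex.I * (-1:ℂ)^j := by
  have hNC : (N:ℂ) ≠ 0 := Nat.cast_ne_zero.mpr hN.ne'
  have harg : Complex.I * (N:ℂ) * ((θ N j : ℝ) : ℂ) = ((2*j+1 : ℕ):ℂ) * (((Real.pi/2 : ℝ):ℂ) * Complex.I) := by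
    unfold θ
    push_cast
    field_simp
  rw [harg, Complex.exp_nat_mul, exp_pi_div_two]
  rw [pow_succ, pow_mul]
  simp [Complex.I_sq]
  ring

lemma key_sum {N : ℕ} (hN : 0 < N) {k : ℤ} (hk : -(N:ℤ) ≤ k) (hk' : k ≤ N) :
    ∑ j ∈ range (2*N), ((c N j : ℝ) : ℂ) * Complex.exp (Complex.I * k * (θ N j : ℝ))
      = Complex.I * k := by
  have hNC : (N:ℂ) ≠ 0 := Nat.cast_ne_zero.mpr hN.ne'
  have hterm : ∀ j ∈ range (2*N),
      ((c N j : ℝ) : ℂ) * Complex.exp (Complex.I * k * (θ N j : ℝ))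
        = (-Complex.I/(4*N)) * (Complex.exp (Complex.I * ((N:ℤ)+k : ℤ) * (θ N j : ℝ)) / ((Real.sin (θ N j / 2) : ℂ))^2) := by
    intro j hj
    rw [Finset.mem_range] at hj
    have hs := sin_theta_ne hN hj
    have hs2 : ((Real.sin (θ N j / 2) : ℂ))^2 ≠ 0 := pow_ne_zero _ hs
    have hsplit : Complex.exp (Complex.I * ((N:ℤ)+k : ℤ) * (θ N j : ℝ))
        = Complex.exp (Complex.I * (N:ℂ) * (θ N j : ℝ)) * Complex.exp (Complex.I * k * (θ N j : ℝ)) := by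
      rw [← Complex.exp_add]
      congr 1
      push_cast
      ring
    rw [hsplit, exp_N_theta hN,
      show (-Complex.I/(4*(N:ℂ))) * ((Complex.I * (-1:ℂ)^j * Complex.exp (Complex.I * k * (θ N j : ℝ)))/((Real.sin (θ N j / 2):ℂ))^2)
        = (-(Complex.I*Complex.I)) * ((-1:ℂ)^j * Complex.exp (Complex.I * k * (θ N j : ℝ))/(4*N*((Real.sin (θ N j / 2):ℂ))^2)) by ring,
      Complex.I_mul_I]
    unfold c
    simp only [Complex.ofReal_div, Complex.ofReal_mul, Complex.ofReal_pow, Complex.ofReal_neg,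
      Complex.ofReal_one, Complex.ofReal_ofNat, Complex.ofReal_natCast]
    ring
  rw [Finset.sum_congr rfl hterm, ← Finset.mul_sum]
  have : ∑ j ∈ range (2*N), Complex.exp (Complex.I * ((N:ℤ)+k : ℤ) * (θ N j : ℝ)) / ((Real.sin (θ N j / 2) : ℂ))^2 = F N ((N:ℤ)+k) := rfl
  rw [this, F_val N hN _ (by linarith) (by linarith)]
  push_cast
  field_simp
  ring

lemma abs_c {N j : ℕ} (hN : 0 < N) (hj : j < 2*N) :
    |c N j| = (4*N * (Real.sin (θ N j / 2))^2)⁻¹ := by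
  have hs := sin_theta_pos hN hj
  unfold c
  rw [_root_.abs_div, _root_.abs_pow, _root_.abs_neg, _root_.abs_one, one_pow, one_div]
  congr 1
  rw [abs_of_pos]
  positivity

lemma sum_inv_sin_sq (N : ℕ) (hN : 0 < N) :
    ∑ j ∈ range (2*N), ((Real.sin (θ N j / 2))^2)⁻¹ = 4*N*N := by
  have h : ((∑ j ∈ range (2*N), ((Real.sin (θ N j / 2))^2)⁻¹ : ℝ) : ℂ) = F N 0 := by
    rw [Complex.ofReal_sum]
    unfold F
    apply Finset.sum_congr rfl
    intro j hj
    push_cast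
    simp
  rw [F_zero_val N hN] at h
  have h2 : ((∑ j ∈ range (2*N), ((Real.sin (θ N j / 2))^2)⁻¹ : ℝ) : ℂ) = ((4*(N:ℝ)*N : ℝ) : ℂ) := by
    rw [h]; push_cast; ring
  exact_mod_cast h2

lemma sum_abs_c (N : ℕ) (hN : 0 < N) : ∑ j ∈ range (2*N), |c N j| = N := by
  have hNR : (N:ℝ) ≠ 0 := Nat.cast_ne_zero.mpr hN.ne'
  have h : ∑ j ∈ range (2*N), |c N j| = (4*(N:ℝ))⁻¹ * ∑ j ∈ range (2*N), ((Real.sin (θ N j / 2))^2)⁻¹ := by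
    rw [Finset.mul_sum]
    apply Finset.sum_congr rfl
    intro j hj
    rw [Finset.mem_range] at hj
    rw [abs_c hN hj, mul_inv]
  rw [h, sum_inv_sin_sq N hN]
  field_simp

end BernsteinAux

open BernsteinAux

/-- Classical Bernstein inequality for trigonometric polynomials:
if `P x = ∑_{k=-N}^N α k * e^{ikx}` then `‖P'‖_∞ ≤ N ‖P‖_∞`. -/
theorem bernstein_trig_poly (N : ℕ) (α : ℤ → ℂ) (P : ℝ → ℂ)
    (hP : ∀ x : ℝ, P x = ∑ k ∈ Finset.Icc (-(N : ℤ)) (N : ℤ),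
      α k * Complex.exp (Complex.I * (k : ℂ) * (x : ℂ))) :
    (⨆ x : ℝ, ‖deriv P x‖) ≤ (N : ℝ) * ⨆ x : ℝ, ‖P x‖ := by
  rcases Nat.eq_zero_or_pos N with hN0 | hN
  · subst hN0
    have hPc : P = fun _ => α 0 := funext fun x => by simpa using hP x
    rw [hPc]
    simp [ciSup_const]
  · -- derivative formula
    have hderiv : ∀ x : ℝ, HasDerivAt P
        (∑ k ∈ Finset.Icc (-(N:ℤ)) (N:ℤ), α k * (Complex.I * k * Complex.exp (Complex.I * k * x))) x := by
      intro x
      have hPfun : P = fun x : ℝ => ∑ k ∈ Finset.Icc (-(N:ℤ)) (N:ℤ),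
          α k * Complex.exp (Complex.I * k * x) := funext hP
      rw [hPfun]
      apply HasDerivAt.fun_sum
      intro k _
      have h1 : HasDerivAt (fun x : ℝ => (x:ℂ)) 1 x := Complex.ofRealCLM.hasDerivAt
      have h2 := ((h1.const_mul (Complex.I * (k:ℂ))).cexp).const_mul (α k)
      refine h2.congr_deriv ?_
      ring
    have hD : ∀ x : ℝ, deriv P x = ∑ j ∈ range (2*N), ((c N j : ℝ):ℂ) * P (x + θ N j) := by
      intro x
      rw [(hderiv x).deriv]
      have step1 : ∀ j ∈ range (2*N), ((c N j : ℝ):ℂ) * P (x + θ N j)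
          = ∑ k ∈ Finset.Icc (-(N:ℤ)) (N:ℤ),
              α k * Complex.exp (Complex.I * k * x) * (((c N j : ℝ):ℂ) * Complex.exp (Complex.I * k * (θ N j : ℝ))) := by
        intro j _
        rw [hP (x + θ N j), Finset.mul_sum]
        apply Finset.sum_congr rfl
        intro k _
        rw [show Complex.I * (k:ℂ) * ((x + θ N j : ℝ) : ℂ)
            = Complex.I * k * (x:ℝ) + Complex.I * k * (θ N j : ℝ) by push_cast; ring,
          Complex.exp_add]
        ring
      rw [Finset.sum_congr rfl step1, Finset.sum_comm]
      apply Finset.sum_congr rfl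
      intro k hk
      rw [Finset.mem_Icc] at hk
      rw [← Finset.mul_sum, key_sum hN hk.1 hk.2]
      ring
    -- boundedness
    have hBdd : BddAbove (Set.range fun x : ℝ => ‖P x‖) := by
      refine ⟨∑ k ∈ Finset.Icc (-(N:ℤ)) (N:ℤ), ‖α k‖, ?_⟩
      rintro _ ⟨x, rfl⟩
      show ‖P x‖ ≤ _
      rw [hP x]
      refine le_trans (norm_sum_le _ _) (Finset.sum_le_sum fun k _ => ?_)
      rw [norm_mul]
      have : ‖Complex.exp (Complex.I * k * (x:ℝ))‖ = 1 := by
        rw [Complex.norm_exp]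
        simp
      rw [this, mul_one]
    have hPM : ∀ y : ℝ, ‖P y‖ ≤ ⨆ x : ℝ, ‖P x‖ := fun y => le_ciSup hBdd y
    apply ciSup_le
    intro x
    rw [hD x]
    calc ‖∑ j ∈ range (2*N), ((c N j : ℝ):ℂ) * P (x + θ N j)‖
        ≤ ∑ j ∈ range (2*N), ‖((c N j : ℝ):ℂ) * P (x + θ N j)‖ := norm_sum_le _ _
      _ ≤ ∑ j ∈ range (2*N), |c N j| * ⨆ x : ℝ, ‖P x‖ := by
          apply Finset.sum_le_sum
          intro j _
          rw [norm_mul, Complex.norm_real, Real.norm_eq_abs]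
          exact mul_le_mul_of_nonneg_left (hPM _) (abs_nonneg _)
      _ = (N : ℝ) * ⨆ x : ℝ, ‖P x‖ := by
          rw [← Finset.sum_mul, sum_abs_c N hN]
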